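/- Let ℓ be a positive integer and let (a₁,…,a_ℓ) ∈ {1,2}^ℓ. Write the continued fraction [a₁,…,a_ℓ] = p/q with p, q coprime positive integers. Then there exists a tree T and a positive integer g such that g is a power of 2, g ≤ q, and i(T) = g·(p + q). -/

import Mathlib

/-- The number of independent sets of a simple graph `G`
(including the empty set). -/
noncomputable def numIndep {V : Type*} (G : SimpleGraph V) : ℕ :=
  Nat.card {s : Set V // ∀ x ∈ s, ∀ y ∈ s, ¬ G.Adj x y}

/-- The continued fraction `[a₁,…,a_ℓ] = 1/(a₁+1/(a₂+⋯+1/a_ℓ))`. -/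
def contFrac : List ℕ → ℚ
  | [] => 0
  | a :: rest => 1 / ((a : ℚ) + contFrac rest)

namespace CFAux
open SimpleGraph
open scoped Classical

def pgraph (n : ℕ) (par : ℕ → ℕ) : SimpleGraph (Fin n) where
  Adj a b := (par a.val = b.val ∧ b.val < a.val) ∨ (par b.val = a.val ∧ a.val < b.val)
  symm := ⟨by intro a b h; tauto⟩
  loopless := ⟨by intro a h; rcases h with ⟨_, h⟩ | ⟨_, h⟩ <;> exact absurd h (lt_irrefl _)⟩

lemma pgraph_congr (n : ℕ) {p1 p2 : ℕ → ℕ} (h : ∀ i < n, p1 i = p2 i) :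
    pgraph n p1 = pgraph n p2 := by
  ext a b
  simp only [pgraph]
  rw [h a.val a.isLt, h b.val b.isLt]

def Ind {n : ℕ} (par : ℕ → ℕ) (s : Set (Fin n)) : Prop :=
  ∀ x ∈ s, ∀ y ∈ s, ¬ (pgraph n par).Adj x y

noncomputable def Acnt (n : ℕ) (par : ℕ → ℕ) : ℕ :=
  Nat.card {s : Set (Fin n) // Ind par s}

noncomputable def Bcnt (n : ℕ) (par : ℕ → ℕ) (r : Fin n) : ℕ :=
  Nat.card {s : Set (Fin n) // Ind par s ∧ r ∉ s}

lemma Ind_congr {n : ℕ} {p1 p2 : ℕ → ℕ} (h : ∀ i < n, p1 i = p2 i) :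
    @Ind n p1 = @Ind n p2 := by unfold Ind; rw [pgraph_congr n h]

lemma Acnt_congr {n : ℕ} {p1 p2 : ℕ → ℕ} (h : ∀ i < n, p1 i = p2 i) :
    Acnt n p1 = Acnt n p2 := by unfold Acnt; rw [Ind_congr h]

lemma Bcnt_congr {n : ℕ} {p1 p2 : ℕ → ℕ} (h : ∀ i < n, p1 i = p2 i) (r : Fin n) :
    Bcnt n p1 r = Bcnt n p2 r := by unfold Bcnt; rw [Ind_congr h]

section Leaf

variable {n : ℕ} {par : ℕ → ℕ}

def res (s' : Set (Fin (n + 1))) : Set (Fin n) := {i | i.castSucc ∈ s'}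

def ext0 (s : Set (Fin n)) : Set (Fin (n + 1)) := Fin.castSucc '' s

def ext1 (s : Set (Fin n)) : Set (Fin (n + 1)) := insert (Fin.last n) (ext0 s)

lemma res_ext0 (s : Set (Fin n)) : res (ext0 s) = s := by
  ext i
  simp [res, ext0, Fin.castSucc_injective n |>.mem_set_image]

lemma castSucc_ne_last (i : Fin n) : i.castSucc ≠ Fin.last n := by
  intro h
  have := congrArg Fin.val h
  simp [Fin.val_last] at this
  omega

lemma res_ext1 (s : Set (Fin n)) : res (ext1 s) = s := by
  ext i
  simp only [res, ext1, Set.mem_insert_iff, Set.mem_setOf_eq]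
  rw [show (Fin.castSucc i = Fin.last n) ↔ False from iff_false_intro (castSucc_ne_last i)]
  simp [ext0, Fin.castSucc_injective n |>.mem_set_image]

lemma last_notmem_ext0 (s : Set (Fin n)) : Fin.last n ∉ ext0 s := by
  rintro ⟨i, _, h⟩
  exact castSucc_ne_last i h

lemma ext0_res {s' : Set (Fin (n + 1))} (h : Fin.last n ∉ s') : ext0 (res s') = s' := by
  ext j
  rcases Fin.eq_castSucc_or_eq_last j with ⟨i, rfl⟩ | rfl
  · simp [ext0, Fin.castSucc_injective n |>.mem_set_image]; rfl
  · simp [h, last_notmem_ext0 (res s')]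

lemma ext1_res {s' : Set (Fin (n + 1))} (h : Fin.last n ∈ s') : ext1 (res s') = s' := by
  ext j
  rcases Fin.eq_castSucc_or_eq_last j with ⟨i, rfl⟩ | rfl
  · simp only [ext1, Set.mem_insert_iff]
    rw [show (Fin.castSucc i = Fin.last n) ↔ False from iff_false_intro (castSucc_ne_last i)]
    simp [ext0, Fin.castSucc_injective n |>.mem_set_image]; rfl
  · simp [ext1, h]

lemma adj_castSucc {i j : Fin n} :
    (pgraph (n + 1) par).Adj i.castSucc j.castSucc ↔ (pgraph n par).Adj i j := by
  simp [pgraph]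

lemma adj_last {u : Fin n} (hu : par n = u.val) (j : Fin n) :
    (pgraph (n + 1) par).Adj (Fin.last n) j.castSucc ↔ j = u := by
  simp only [pgraph, Fin.val_last, Fin.coe_castSucc]
  constructor
  · rintro (⟨h1, _⟩ | ⟨_, h2⟩)
    · exact Fin.ext (by omega)
    · exact absurd h2 (by omega)
  · rintro rfl
    exact Or.inl ⟨by rw [hu], Fin.is_lt _⟩

lemma ind_res {s' : Set (Fin (n + 1))} (h : Ind par s') : Ind par (res s') := by
  intro x hx y hy hadj
  exact h _ hx _ hy (adj_castSucc.2 hadj)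

lemma notmem_res {u : Fin n} (hu : par n = u.val) {s' : Set (Fin (n + 1))}
    (h : Ind par s') (hl : Fin.last n ∈ s') : u ∉ res s' := by
  intro hmem
  exact h _ hl _ hmem ((adj_last hu u).2 rfl)

lemma ind_ext0 {s : Set (Fin n)} (h : Ind par s) : Ind par (ext0 s) := by
  rintro x ⟨a, ha, rfl⟩ y ⟨b, hb, rfl⟩ hadj
  exact h a ha b hb (adj_castSucc.1 hadj)

lemma ind_ext1 {u : Fin n} (hu : par n = u.val) {s : Set (Fin n)}
    (h : Ind par s) (hus : u ∉ s) : Ind par (ext1 s) := by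
  have hlast : ∀ b ∈ s, ¬ (pgraph (n+1) par).Adj (Fin.last n) b.castSucc := by
    intro b hb hadj
    exact hus (((adj_last hu b).1 hadj) ▸ hb)
  rintro x hx y hy hadj
  rcases hx with rfl | ⟨a, ha, rfl⟩
  · rcases hy with rfl | ⟨b, hb, rfl⟩
    · exact (pgraph (n+1) par).loopless.irrefl _ hadj
    · exact hlast b hb hadj
  · rcases hy with rfl | ⟨b, hb, rfl⟩
    · exact hlast a ha hadj.symm
    · exact h a ha b hb (adj_castSucc.1 hadj)

variable (par) in
noncomputable def e1 (n : ℕ) (u : Fin n) (hu : par n = u.val) :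
    {s' : Set (Fin (n + 1)) // Ind par s'} ≃
      {s : Set (Fin n) // Ind par s} ⊕ {s : Set (Fin n) // Ind par s ∧ u ∉ s} where
  toFun s' :=
    if h : Fin.last n ∈ s'.1 then
      Sum.inr ⟨res s'.1, ind_res s'.2, notmem_res hu s'.2 h⟩
    else Sum.inl ⟨res s'.1, ind_res s'.2⟩
  invFun x :=
    match x with
    | Sum.inl s => ⟨ext0 s.1, ind_ext0 s.2⟩
    | Sum.inr s => ⟨ext1 s.1, ind_ext1 hu s.2.1 s.2.2⟩
  left_inv := by
    rintro ⟨s', hs'⟩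
    by_cases h : Fin.last n ∈ s'
    · simp only [h, dite_true]
      exact Subtype.ext (ext1_res h)
    · simp only [h, dite_false]
      exact Subtype.ext (ext0_res h)
  right_inv := by
    rintro (⟨s, hs⟩ | ⟨s, hs⟩)
    · simp only [last_notmem_ext0 s, dite_false]
      congr 1
      exact Subtype.ext (res_ext0 s)
    · have : Fin.last n ∈ ext1 s := Set.mem_insert _ _
      simp only [this, dite_true]
      congr 1
      exact Subtype.ext (res_ext1 s)

variable (par) in
noncomputable def e2 (n : ℕ) (u : Fin n) (hu : par n = u.val) :
    {s' : Set (Fin (n + 1)) // Ind par s' ∧ u.castSucc ∉ s'} ≃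
      {s : Set (Fin n) // Ind par s ∧ u ∉ s} ⊕ {s : Set (Fin n) // Ind par s ∧ u ∉ s} where
  toFun s' :=
    if h : Fin.last n ∈ s'.1 then
      Sum.inr ⟨res s'.1, ind_res s'.2.1, s'.2.2⟩
    else Sum.inl ⟨res s'.1, ind_res s'.2.1, s'.2.2⟩
  invFun x :=
    match x with
    | Sum.inl s => ⟨ext0 s.1, ind_ext0 s.2.1, by
        rw [show u.castSucc ∈ ext0 s.1 ↔ u ∈ s.1 from
          Fin.castSucc_injective n |>.mem_set_image]
        exact s.2.2⟩
    | Sum.inr s => ⟨ext1 s.1, ind_ext1 hu s.2.1 s.2.2, by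
        intro hmem
        rcases hmem with h | h
        · exact castSucc_ne_last u h
        · rw [show u.castSucc ∈ ext0 s.1 ↔ u ∈ s.1 from
            Fin.castSucc_injective n |>.mem_set_image] at h
          exact s.2.2 h⟩
  left_inv := by
    rintro ⟨s', hs'⟩
    by_cases h : Fin.last n ∈ s'
    · simp only [h, dite_true]
      exact Subtype.ext (ext1_res h)
    · simp only [h, dite_false]
      exact Subtype.ext (ext0_res h)
  right_inv := by
    rintro (⟨s, hs⟩ | ⟨s, hs⟩)
    · simp only [last_notmem_ext0 s, dite_false]
      congr 1
      exact Subtype.ext (res_ext0 s)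
    · have : Fin.last n ∈ ext1 s := Set.mem_insert _ _
      simp only [this, dite_true]
      congr 1
      exact Subtype.ext (res_ext1 s)

variable (par) in
noncomputable def e3 (n : ℕ) :
    {s' : Set (Fin (n + 1)) // Ind par s' ∧ Fin.last n ∉ s'} ≃
      {s : Set (Fin n) // Ind par s} where
  toFun s' := ⟨res s'.1, ind_res s'.2.1⟩
  invFun s := ⟨ext0 s.1, ind_ext0 s.2, last_notmem_ext0 s.1⟩
  left_inv := by
    rintro ⟨s', hs'⟩
    exact Subtype.ext (ext0_res hs'.2)
  right_inv := by
    rintro ⟨s, hs⟩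
    exact Subtype.ext (res_ext0 s)

instance (n : ℕ) : Finite (Set (Fin n)) := by
  have : Finite (Fin n → Prop) := inferInstance
  exact this

lemma Acnt_succ {u : Fin n} (hu : par n = u.val) :
    Acnt (n + 1) par = Acnt n par + Bcnt n par u := by
  unfold Acnt Bcnt
  rw [Nat.card_congr (e1 par n u hu), Nat.card_sum]

lemma Bcnt_succ_castSucc {u : Fin n} (hu : par n = u.val) :
    Bcnt (n + 1) par u.castSucc = 2 * Bcnt n par u := by
  unfold Bcnt
  rw [Nat.card_congr (e2 par n u hu), Nat.card_sum]
  ring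

lemma Bcnt_succ_last :
    Bcnt (n + 1) par (Fin.last n) = Acnt n par := by
  unfold Acnt Bcnt
  rw [Nat.card_congr (e3 par n)]

end Leaf

lemma adj_one (par : ℕ → ℕ) (x y : Fin 1) : ¬ (pgraph 1 par).Adj x y := by
  rintro (⟨_, h⟩ | ⟨_, h⟩) <;> omega

lemma Acnt_one (par : ℕ → ℕ) : Acnt 1 par = 2 := by
  unfold Acnt
  rw [Nat.card_congr (Equiv.subtypeUnivEquiv (fun s => by
    intro x hx y hy hadj; exact adj_one par x y hadj))]
  have h2 : Nat.card (Set (Fin 1)) = Nat.card Bool :=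
    Nat.card_congr ((Equiv.funUnique (Fin 1) Prop).trans Equiv.propEquivBool)
  rw [h2]
  simp [Nat.card_eq_fintype_card]

lemma Bcnt_one (par : ℕ → ℕ) (r : Fin 1) : Bcnt 1 par r = 1 := by
  unfold Bcnt
  haveI : Unique {s : Set (Fin 1) // Ind par s ∧ r ∉ s} := by
    refine ⟨⟨⟨∅, by intro x hx; exact absurd hx (Set.notMem_empty x), by simp⟩⟩, ?_⟩
    rintro ⟨s, hs, hr⟩
    apply Subtype.ext
    ext x
    simp only [Set.mem_empty_iff_false, iff_false]
    intro hx
    exact hr (Subsingleton.elim x r ▸ hx)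
  exact Nat.card_unique

theorem pgraph_isTree (n : ℕ) (par : ℕ → ℕ) (hn : 0 < n)
    (hpar : ∀ i, 0 < i → i < n → par i < i) : (pgraph n par).IsTree := by
  constructor
  · -- connected
    have hreach : ∀ k, ∀ v : Fin n, v.val = k → (pgraph n par).Reachable v ⟨0, hn⟩ := by
      intro k
      induction k using Nat.strong_induction_on with
      | _ k ih =>
        intro v hv
        rcases Nat.eq_zero_or_pos k with rfl | hk
        · exact Eq.refl (α := Fin n) v ▸ (by
            have : v = ⟨0, hn⟩ := Fin.ext hv
            rw [this])
        · have hlt : par v.val < v.val := hpar v.val (hv ▸ hk) v.isLt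
          have hadj : (pgraph n par).Adj v ⟨par v.val, lt_trans hlt v.isLt⟩ :=
            Or.inl ⟨rfl, hlt⟩
          exact hadj.reachable.trans (ih (par v.val) (hv ▸ hlt) _ rfl)
    haveI : Nonempty (Fin n) := ⟨⟨0, hn⟩⟩
    exact SimpleGraph.Connected.mk
      (fun v w => (hreach v.val v rfl).trans (hreach w.val w rfl).symm)
  · -- acyclic
    intro v c hc
    classical
    have hvmem : v ∈ c.support := c.start_mem_support
    have hne : c.support.toFinset.Nonempty := ⟨v, List.mem_toFinset.2 hvmem⟩
    set M := c.support.toFinset.max' hne with hM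
    have hMmem : M ∈ c.support := List.mem_toFinset.1 (c.support.toFinset.max'_mem hne)
    have hMmax : ∀ w ∈ c.support, w ≤ M :=
      fun w hw => c.support.toFinset.le_max' w (List.mem_toFinset.2 hw)
    set c' := c.rotate M hMmem with hc'def
    have hc' : c'.IsCycle := hc.rotate hMmem
    have hsup : ∀ w ∈ c'.support, w ≤ M := by
      intro w hw
      rw [SimpleGraph.Walk.support_eq_cons] at hw
      rcases List.mem_cons.1 hw with rfl | hw
      · exact le_refl _
      · have : w ∈ c.support.tail := ((SimpleGraph.Walk.support_rotate c M hMmem).mem_iff).1 hw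
        exact hMmax w (List.mem_of_mem_tail this)
    -- destructure the cycle
    obtain ⟨x, hadj, p, hp⟩ := SimpleGraph.Walk.not_nil_iff.1 hc'.not_nil
    rw [hp] at hc' hsup
    · have hxM : x ≠ M := fun h => (pgraph n par).loopless.irrefl M (h ▸ hadj)
      have hxmem : x ∈ p.support := p.start_mem_support
      have hxle : x ≤ M := hsup x (by
        rw [SimpleGraph.Walk.support_cons]; exact List.mem_cons_of_mem _ hxmem)
      have hxpar : par M.val = x.val := by
        rcases hadj with ⟨h1, _⟩ | ⟨_, h2⟩
        · exact h1
        · exact absurd h2 (by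
            have := Fin.lt_iff_val_lt_val.1 (lt_of_le_of_ne hxle hxM)
            omega)
      -- last edge
      have hMx' : M ≠ x := fun h => hxM h.symm
      obtain ⟨y, hadj2, q, hq⟩ := SimpleGraph.Walk.exists_eq_cons_of_ne hMx' p.reverse
      have hymem : y ∈ p.support := by
        have : y ∈ p.reverse.support := by
          rw [hq, SimpleGraph.Walk.support_cons]
          exact List.mem_cons_of_mem _ q.start_mem_support
        rwa [SimpleGraph.Walk.support_reverse, List.mem_reverse] at this
      have hyM : y ≠ M := fun h => (pgraph n par).loopless.irrefl M (h ▸ hadj2)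
      have hyle : y ≤ M := hsup y (by
        rw [SimpleGraph.Walk.support_cons]; exact List.mem_cons_of_mem _ hymem)
      have hypar : par M.val = y.val := by
        rcases hadj2 with ⟨h1, _⟩ | ⟨_, h2⟩
        · exact h1
        · exact absurd h2 (by
            have := Fin.lt_iff_val_lt_val.1 (lt_of_le_of_ne hyle hyM)
            omega)
      have hxy : y = x := Fin.ext (hypar ▸ hxpar ▸ rfl)
      -- edge s(M,y) is in p.edges
      have hedge : s(M, y) ∈ p.edges := by
        have : s(M, y) ∈ p.reverse.edges := by
          rw [hq, SimpleGraph.Walk.edges_cons]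
          exact List.mem_cons_self
        rwa [SimpleGraph.Walk.edges_reverse, List.mem_reverse] at this
      have hnodup := hc'.edges_nodup
      rw [SimpleGraph.Walk.edges_cons, List.nodup_cons] at hnodup
      exact hnodup.1 (hxy ▸ hedge)


/-- numerator/denominator recursion for the continued fraction. -/
def pq : List ℕ → ℕ × ℕ
  | [] => (0, 1)
  | a :: r => ((pq r).2, a * (pq r).2 + (pq r).1)

lemma pq_den_pos (L : List ℕ) (h : ∀ a ∈ L, 0 < a) : 0 < (pq L).2 := by
  induction L with
  | nil => simp [pq]
  | cons a r ih =>
      have ha : 0 < a := h a (List.mem_cons_self)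
      have := ih (fun b hb => h b (List.mem_cons_of_mem a hb))
      simp only [pq]
      nlinarith

lemma pq_num_le (L : List ℕ) (h : ∀ a ∈ L, 0 < a) : (pq L).1 ≤ (pq L).2 := by
  induction L with
  | nil => simp [pq]
  | cons a r ih =>
      have ha : 0 < a := h a (List.mem_cons_self)
      have h' := fun b hb => h b (List.mem_cons_of_mem a hb)
      have h1 := ih h'
      have h2 := pq_den_pos r h'
      simp only [pq]
      nlinarith

lemma pq_coprime (L : List ℕ) : Nat.Coprime (pq L).1 (pq L).2 := by
  induction L with
  | nil => simp [pq, Nat.coprime_one_right]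
  | cons a r ih =>
      simp only [pq]
      have : Nat.Coprime (pq r).2 ((pq r).1 + (pq r).2 * a) :=
        (Nat.coprime_add_mul_left_right (pq r).2 (pq r).1 a).2 (Nat.coprime_comm.1 ih)
      have heq : (pq r).1 + (pq r).2 * a = a * (pq r).2 + (pq r).1 := by ring
      rw [heq] at this
      exact this

lemma contFrac_eq_pq (L : List ℕ) (h : ∀ a ∈ L, 0 < a) :
    contFrac L = ((pq L).1 : ℚ) / ((pq L).2 : ℚ) := by
  induction L with
  | nil => simp [contFrac, pq]
  | cons a r ih =>
      have ha : 0 < a := h a (List.mem_cons_self)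
      have h' := fun b hb => h b (List.mem_cons_of_mem a hb)
      have hq : 0 < (pq r).2 := pq_den_pos r h'
      have hq' : ((pq r).2 : ℚ) ≠ 0 := by positivity
      have hden : (0:ℚ) < a * (pq r).2 + (pq r).1 := by
        have : (1:ℚ) ≤ (a:ℚ) := by exact_mod_cast ha
        have : (1:ℚ) ≤ ((pq r).2:ℚ) := by exact_mod_cast hq
        positivity
      rw [contFrac, ih h']
      simp only [pq]
      push_cast
      rw [show (a:ℚ) + (pq r).1 / (pq r).2 = ((a:ℚ) * (pq r).2 + (pq r).1) / (pq r).2 by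
        field_simp]
      rw [one_div_div]

lemma contFrac_num (L : List ℕ) (h : ∀ a ∈ L, 0 < a) :
    (contFrac L).num = ((pq L).1 : ℤ) ∧ (contFrac L).den = (pq L).2 := by
  have hq : 0 < (pq L).2 := pq_den_pos L h
  have hco : Nat.Coprime ((pq L).1 : ℤ).natAbs ((pq L).2 : ℤ).natAbs := by
    simpa using pq_coprime L
  have heq : contFrac L = (((pq L).1 : ℤ) : ℚ) / (((pq L).2 : ℤ) : ℚ) := by
    rw [contFrac_eq_pq L h]; push_cast; ring
  constructor
  · rw [heq]
    exact Rat.num_div_eq_of_coprime (by exact_mod_cast hq) hco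
  · rw [heq]
    have := Rat.den_div_eq_of_coprime (a := ((pq L).1 : ℤ)) (b := ((pq L).2 : ℤ))
      (by exact_mod_cast hq) hco
    exact_mod_cast this


theorem key (L : List ℕ) (hL : L ≠ []) (h12 : ∀ a ∈ L, a = 1 ∨ a = 2) :
    ∃ (n : ℕ) (par : ℕ → ℕ) (rt : Fin n) (j : ℕ),
      (∀ i, 0 < i → i < n → par i < i) ∧ 0 < n ∧
      2 ^ j ≤ (pq L).2 ∧
      Acnt n par = 2 ^ j * ((pq L).1 + (pq L).2) ∧
      Bcnt n par rt = 2 ^ j * (pq L).2 := by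
  induction L with
  | nil => exact absurd rfl hL
  | cons a r ih =>
    match r, ih with
    | [], _ =>
      rcases h12 a (List.mem_cons_self) with rfl | rfl
      · refine ⟨1, fun _ => 0, ⟨0, one_pos⟩, 0, ?_, one_pos, ?_, ?_, ?_⟩
        · intro i hi hi'; omega
        · simp [pq]
        · rw [Acnt_one]; simp [pq]
        · rw [Bcnt_one]; simp [pq]
      · refine ⟨2, fun _ => 0, Fin.last 1, 0, ?_, two_pos, ?_, ?_, ?_⟩
        · intro i hi hi'; interval_cases i <;> simp
        · simp [pq]
        · have hu : (fun _ => 0 : ℕ → ℕ) 1 = (⟨0, one_pos⟩ : Fin 1).val := rfl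
          rw [Acnt_succ hu, Acnt_one, Bcnt_one]
          simp [pq]
        · rw [Bcnt_succ_last, Acnt_one]
          simp [pq]
    | b :: r', ih =>
      obtain ⟨n, par, rt, j, hvalid, hn, hle, hA, hB⟩ :=
        ih (by simp) (fun x hx => h12 x (List.mem_cons_of_mem a hx))
      set p := (pq (b :: r')).1 with hp
      set q := (pq (b :: r')).2 with hq
      rcases h12 a (List.mem_cons_self) with rfl | rfl
      · -- a = 1
        set par' := Function.update par n rt.val with hpar'
        have hagree : ∀ i < n, par' i = par i := by
          intro i hi
          exact Function.update_of_ne (by omega) _ _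
        have hu : par' n = rt.val := Function.update_self _ _ _
        refine ⟨n + 1, par', Fin.last n, j, ?_, Nat.succ_pos n, ?_, ?_, ?_⟩
        · intro i hi hi'
          rcases Nat.lt_or_ge i n with h | h
          · rw [hagree i h]; exact hvalid i hi h
          · have : i = n := by omega
            subst this
            rw [hu]; exact rt.isLt
        · have hstep : pq (1 :: b :: r') = (q, 1 * q + p) := rfl
          rw [hstep]
          omega
        · have hstep : pq (1 :: b :: r') = (q, 1 * q + p) := rfl
          rw [Acnt_succ hu, Acnt_congr hagree, Bcnt_congr hagree, hA, hB, hstep]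
          ring
        · have hstep : pq (1 :: b :: r') = (q, 1 * q + p) := rfl
          rw [Bcnt_succ_last, Acnt_congr hagree, hA, hstep]
          ring
      · -- a = 2
        set par3 := Function.update (Function.update (Function.update par n rt.val)
          (n + 1) rt.val) (n + 2) (n + 1) with hpar3
        have hagree : ∀ i < n, par3 i = par i := by
          intro i hi
          simp only [hpar3]
          rw [Function.update_of_ne (by omega), Function.update_of_ne (by omega),
            Function.update_of_ne (by omega)]
        have hu0 : par3 n = rt.val := by
          simp only [hpar3]
          rw [Function.update_of_ne (by omega), Function.update_of_ne (by omega),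
            Function.update_self]
        have hu1 : par3 (n + 1) = (rt.castSucc).val := by
          simp only [hpar3]
          rw [Function.update_of_ne (by omega), Function.update_self]
          rfl
        have hu2 : par3 (n + 2) = (Fin.last (n + 1)).val := by
          simp only [hpar3]
          rw [Function.update_self]
          rfl
        have hA1 : Acnt (n + 1) par3 = Acnt n par + Bcnt n par rt := by
          rw [Acnt_succ hu0, Acnt_congr hagree, Bcnt_congr hagree]
        have hB1 : Bcnt (n + 1) par3 rt.castSucc = 2 * Bcnt n par rt := by
          rw [Bcnt_succ_castSucc hu0, Bcnt_congr hagree]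
        have hA2 : Acnt (n + 2) par3 =
            Acnt (n + 1) par3 + Bcnt (n + 1) par3 rt.castSucc := Acnt_succ hu1
        have hB2 : Bcnt (n + 2) par3 (Fin.last (n + 1)) = Acnt (n + 1) par3 :=
          Bcnt_succ_last
        have hA3 : Acnt (n + 3) par3 =
            Acnt (n + 2) par3 + Bcnt (n + 2) par3 (Fin.last (n + 1)) := Acnt_succ hu2
        have hB3 : Bcnt (n + 3) par3 ((Fin.last (n + 1)).castSucc) =
            2 * Bcnt (n + 2) par3 (Fin.last (n + 1)) := Bcnt_succ_castSucc hu2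
        refine ⟨n + 3, par3, (Fin.last (n + 1)).castSucc, j + 1, ?_, by omega, ?_, ?_, ?_⟩
        · intro i hi hi'
          rcases Nat.lt_or_ge i n with h | h
          · rw [hagree i h]; exact hvalid i hi h
          · have hr := rt.isLt
            have hcases : i = n ∨ i = n + 1 ∨ i = n + 2 := by omega
            rcases hcases with rfl | rfl | rfl
            · rw [hu0]; omega
            · rw [hu1]; simp only [Fin.coe_castSucc]; omega
            · rw [hu2]; simp only [Fin.val_last]; omega
        · have hstep : pq (2 :: b :: r') = (q, 2 * q + p) := rfl
          rw [hstep, pow_succ]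
          omega
        · have hstep : pq (2 :: b :: r') = (q, 2 * q + p) := rfl
          rw [hA3, hB2, hA2, hB1, hA1, hA, hB, hstep, pow_succ]
          ring
        · have hstep : pq (2 :: b :: r') = (q, 2 * q + p) := rfl
          rw [hB3, hB2, hA1, hA, hB, hstep, pow_succ]
          ring

end CFAux


/-- If `(a₁,…,a_ℓ) ∈ {1,2}^ℓ` (with `ℓ ≥ 1`) and `[a₁,…,a_ℓ] = p/q` in lowest
terms, then there is a tree `T` and a power of two `g ≤ q` with
`i(T) = g·(p + q)`. -/
theorem exists_tree_of_contFrac (L : List ℕ) (hL : L ≠ [])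
    (h12 : ∀ a ∈ L, a = 1 ∨ a = 2) :
    ∃ (n : ℕ) (T : SimpleGraph (Fin n)) (g : ℕ),
      T.IsTree ∧ (∃ j : ℕ, g = 2 ^ j) ∧ g ≤ (contFrac L).den ∧
      numIndep T = g * ((contFrac L).num.toNat + (contFrac L).den) := by
  have hpos : ∀ a ∈ L, 0 < a := by
    intro a ha; rcases h12 a ha with rfl | rfl <;> norm_num
  obtain ⟨hnum, hden⟩ := CFAux.contFrac_num L hpos
  obtain ⟨n, par, rt, j, hvalid, hn, hle, hA, hB⟩ := CFAux.key L hL h12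
  refine ⟨n, CFAux.pgraph n par, 2 ^ j, CFAux.pgraph_isTree n par hn hvalid, ⟨j, rfl⟩, ?_, ?_⟩
  · rw [hden]; exact hle
  · have : numIndep (CFAux.pgraph n par) = CFAux.Acnt n par := rfl
    rw [this, hA, hnum, hden]
    simp
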